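/- Let 0 < a < b be real numbers. Then for every x ∈ (a,b), ( A(a,b)/I(a,b) )^{b−a} ≥ ( A(a,x)/I(a,x) )^{x−a}, where A(u,v) = (u+v)/2 is the arithmetic mean and I(u,v) = (1/e)·(v^v/u^u)^{1/(v−u)} is the identric mean. Explicitly: (b−a)·( log((a+b)/2) − (b·log b − a·log a)/(b−a) + 1 ) ≥ (x−a)·( log((a+x)/2) − (x·log x − a·log a)/(x−a) + 1 ). -/

import Mathlib

open Real

lemma fejer17_deriv (a : ℝ) (ha : 0 < a) (y : ℝ) (hy : a < y) :
    HasDerivAt (fun y => (y - a) * (Real.log ((a + y) / 2) + 1) - y * Real.log y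
      + a * Real.log a)
      (Real.log ((a + y) / 2) - Real.log y + (y - a) / (a + y)) y := by
  have hy0 : 0 < y := ha.trans hy
  have hay : 0 < a + y := by linarith
  have h1 : HasDerivAt (fun y : ℝ => Real.log ((a + y) / 2)) (1 / (a + y)) y := by
    have h0 : HasDerivAt (fun y : ℝ => (a + y) / 2) (1 / 2) y :=
      ((hasDerivAt_id y).const_add a).div_const 2
    have := h0.log (by positivity)
    convert this using 1
    field_simp
  have h2 : HasDerivAt (fun y : ℝ => (y - a) * (Real.log ((a + y) / 2) + 1))
      (1 * (Real.log ((a + y) / 2) + 1) + (y - a) * (1 / (a + y))) y :=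
    ((hasDerivAt_id y).sub_const a).mul (h1.add_const 1)
  have h3 : HasDerivAt (fun y : ℝ => y * Real.log y) (Real.log y + 1) y :=
    Real.hasDerivAt_mul_log (ne_of_gt hy0)
  have := (h2.sub h3).add_const (a * Real.log a)
  refine this.congr_deriv ?_
  ring

lemma fejer17_deriv_nonneg (a : ℝ) (ha : 0 < a) (y : ℝ) (hy : a < y) :
    0 ≤ Real.log ((a + y) / 2) - Real.log y + (y - a) / (a + y) := by
  have hy0 : 0 < y := ha.trans hy
  have hay : 0 < a + y := by linarith
  have h1 : Real.log y - Real.log ((a + y) / 2) = Real.log (2 * y / (a + y)) := by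
    rw [Real.log_div (by positivity) (ne_of_gt hay), Real.log_div (by positivity) (by norm_num),
      Real.log_mul (by norm_num) (ne_of_gt hy0)]
    ring
  have h2 : Real.log (2 * y / (a + y)) ≤ 2 * y / (a + y) - 1 :=
    Real.log_le_sub_one_of_pos (by positivity)
  have h3 : 2 * y / (a + y) - 1 = (y - a) / (a + y) := by field_simp; ring
  linarith [h1 ▸ h2, h3 ▸ (h1 ▸ h2)]

/-- Application (arithmetic/identric means): for `0 < a < b` and `x ∈ (a,b)`:
`(A(a,b)/I(a,b))^{b−a} ≥ (A(a,x)/I(a,x))^{x−a}`, written explicitly as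
`(b−a)·(log((a+b)/2) − (b·log b − a·log a)/(b−a) + 1)
  ≥ (x−a)·(log((a+x)/2) − (x·log x − a·log a)/(x−a) + 1)`. -/
theorem fejer_stmt_17 (a b : ℝ) (ha : 0 < a) (hab : a < b)
    (x : ℝ) (hx : x ∈ Set.Ioo a b) :
    (x - a) * (Real.log ((a + x) / 2)
        - (x * Real.log x - a * Real.log a) / (x - a) + 1)
      ≤ (b - a) * (Real.log ((a + b) / 2)
        - (b * Real.log b - a * Real.log a) / (b - a) + 1) := by
  obtain ⟨hax, hxb⟩ := hx
  set F : ℝ → ℝ := fun y => (y - a) * (Real.log ((a + y) / 2) + 1) - y * Real.log y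
      + a * Real.log a with hF
  have hmono : MonotoneOn F (Set.Icc x b) := by
    apply monotoneOn_of_deriv_nonneg (convex_Icc x b)
    · intro y hy
      have hay : a < y := lt_of_lt_of_le hax hy.1
      exact (fejer17_deriv a ha y hay).continuousAt.continuousWithinAt
    · intro y hy
      rw [interior_Icc] at hy
      have hay : a < y := hax.trans hy.1
      exact (fejer17_deriv a ha y hay).differentiableAt.differentiableWithinAt
    · intro y hy
      rw [interior_Icc] at hy
      have hay : a < y := hax.trans hy.1
      simp only [hF]
      rw [(fejer17_deriv a ha y hay).deriv]
      exact fejer17_deriv_nonneg a ha y hay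
  have key : F x ≤ F b :=
    hmono (Set.left_mem_Icc.mpr hxb.le) (Set.right_mem_Icc.mpr hxb.le) hxb.le
  have hxa : x - a ≠ 0 := by linarith
  have hba : b - a ≠ 0 := by linarith
  have e1 : (x - a) * (Real.log ((a + x) / 2)
      - (x * Real.log x - a * Real.log a) / (x - a) + 1) = F x := by
    field_simp [hF]; ring
  have e2 : (b - a) * (Real.log ((a + b) / 2)
      - (b * Real.log b - a * Real.log a) / (b - a) + 1) = F b := by
    field_simp [hF]; ring
  rw [e1, e2]; exact key
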